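/- arXiv:0811.1075 — 2 statements merged into one kernel-verified Lean document; each statement's English description precedes it below -/
import Mathlib

section
/- Let F be an unsatisfiable set of clauses, T a regular resolution tree deriving clause C from F of size s, and α a partial assignment falsifying C with no variable of α's domain used as a resolution variable in T. Then there is an execution of DLL(F, α) returning UNSAT after at most s−1 recursive calls. -/
open Classical

noncomputable section

abbrev Var := ℕ
abbrev Lit := Var × Bool

def Lit.neg (l : Lit) : Lit := (l.1, !l.2)
def posLit (x : Var) : Lit := (x, true)
def negLit (x : Var) : Lit := (x, false)

abbrev Clause := Finset Lit
abbrev CNF := Set Clause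
abbrev Assign := Var → Option Bool

def Assign.set (α : Assign) (x : Var) (b : Bool) : Assign :=
  fun y => if y = x then some b else α y

def emptyAssign : Assign := fun _ => none

/-- `α` assigns the value false to every literal of `C` (i.e. `C↾α = 0`). -/
def falsifies (α : Assign) (C : Clause) : Prop := ∀ l ∈ C, α l.1 = some (!l.2)

def satLit (α : Assign) (l : Lit) : Prop := α l.1 = some l.2

/-- `F↾α = 0`. -/
def CNFFalse (F : CNF) (α : Assign) : Prop := ∃ C ∈ F, falsifies α C

/-- `F↾α = 1`. -/
def CNFTrue (F : CNF) (α : Assign) : Prop := ∀ C ∈ F, ∃ l ∈ C, satLit α l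

def Unsat (F : CNF) : Prop := ¬ ∃ β : Var → Bool, ∀ C ∈ F, ∃ l ∈ C, β l.1 = l.2

/-- The (w-)resolvent of `C0` and `C1` on the variable `x`. -/
def Resolvent (C0 C1 : Clause) (x : Var) : Clause :=
  C0.erase (posLit x) ∪ C1.erase (negLit x)

/-- A resolution derivation, as a sequence of clauses. -/
def IsResDeriv (F : CNF) (L : List Clause) : Prop :=
  ∀ i (hi : i < L.length),
    L[i] ∈ F ∨ ∃ j k x, ∃ hj : j < L.length, ∃ hk : k < L.length, j < i ∧ k < i ∧
      posLit x ∈ L[j] ∧ negLit x ∈ L[k] ∧ L[i] = Resolvent L[j] L[k] x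

/-- A w-resolution derivation: no membership requirements on the resolved variable. -/
def IsWResDeriv (F : CNF) (L : List Clause) : Prop :=
  ∀ i (hi : i < L.length),
    L[i] ∈ F ∨ ∃ j k x, ∃ hj : j < L.length, ∃ hk : k < L.length, j < i ∧ k < i ∧
      L[i] = Resolvent L[j] L[k] x

/-- A derivation using resolution and the weakening rule. -/
def IsResWeakDeriv (F : CNF) (L : List Clause) : Prop :=
  ∀ i (hi : i < L.length),
    L[i] ∈ F ∨
    (∃ j, ∃ hj : j < L.length, j < i ∧ L[j] ⊆ L[i]) ∨
    ∃ j k x, ∃ hj : j < L.length, ∃ hk : k < L.length, j < i ∧ k < i ∧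
      posLit x ∈ L[j] ∧ negLit x ∈ L[k] ∧ L[i] = Resolvent L[j] L[k] x

/-- Ordered binary resolution trees (nodes carry their clause and resolution variable). -/
inductive RTree where
  | leaf (C : Clause)
  | node (C : Clause) (x : Var) (t0 t1 : RTree)

namespace RTree

def conc : RTree → Clause
  | leaf C => C
  | node C _ _ _ => C

def size : RTree → ℕ
  | leaf _ => 1
  | node _ _ t0 t1 => t0.size + t1.size + 1

def resVars : RTree → Finset Var
  | leaf _ => ∅
  | node _ x t0 t1 => insert x (t0.resVars ∪ t1.resVars)

def allClauses : RTree → Set Clause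
  | leaf C => {C}
  | node C _ t0 t1 => {C} ∪ t0.allClauses ∪ t1.allClauses

def derivedClauses : RTree → Set Clause
  | leaf _ => ∅
  | node C _ t0 t1 => {C} ∪ t0.derivedClauses ∪ t1.derivedClauses

def leafClauses : RTree → Set Clause
  | leaf C => {C}
  | node _ _ t0 t1 => t0.leafClauses ∪ t1.leafClauses

def isLeaf : RTree → Prop
  | leaf _ => True
  | node _ _ _ _ => False

/-- Every internal node has at least one leaf child: input trees. -/
def inputShape : RTree → Prop
  | leaf _ => True
  | node _ _ t0 t1 => (t0.isLeaf ∨ t1.isLeaf) ∧ t0.inputShape ∧ t1.inputShape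

/-- All inferences are proper (ordinary) resolution inferences. -/
def properRes : RTree → Prop
  | leaf _ => True
  | node C x t0 t1 => posLit x ∈ t0.conc ∧ negLit x ∈ t1.conc ∧
      C = Resolvent t0.conc t1.conc x ∧ t0.properRes ∧ t1.properRes

/-- The clauses of the input-derived nodes of a tree (subtrees that are input
resolution proofs). -/
def inputClauses : RTree → Set Clause
  | leaf C => {C}
  | node C x t0 t1 =>
      (if (RTree.node C x t0 t1).inputShape ∧ (RTree.node C x t0 t1).properRes
        then ({C} : Set Clause) else ∅)
      ∪ t0.inputClauses ∪ t1.inputClauses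

/-- Number of non-input-derived nodes. -/
def nonInputCount : RTree → ℕ
  | leaf _ => 0
  | node C x t0 t1 =>
      (if (RTree.node C x t0 t1).inputShape ∧ (RTree.node C x t0 t1).properRes
        then 0 else 1)
      + t0.nonInputCount + t1.nonInputCount

/-- Regularity: no variable is used twice as resolution variable on a path. -/
def regAux : RTree → Set Var → Prop
  | leaf _, _ => True
  | node _ x t0 t1, s => x ∉ s ∧ t0.regAux (insert x s) ∧ t1.regAux (insert x s)

def regular (t : RTree) : Prop := t.regAux ∅

end RTree

/-- An ordinary resolution tree with all leaves labeled by clauses of `F`. -/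
def IsResTreeFrom (F : CNF) : RTree → Prop
  | .leaf C => C ∈ F
  | .node C x t0 t1 => IsResTreeFrom F t0 ∧ IsResTreeFrom F t1 ∧
      posLit x ∈ t0.conc ∧ negLit x ∈ t1.conc ∧ C = Resolvent t0.conc t1.conc x

/-- Resolution tree with input lemmas; `avail` is the set of lemmas available
from earlier (in post-order) input-derived nodes. -/
def IsRTI (F : CNF) : RTree → Set Clause → Prop
  | .leaf C, avail => C ∈ F ∨ C ∈ avail
  | .node C x t0 t1, avail => IsRTI F t0 avail ∧ IsRTI F t1 (avail ∪ t0.inputClauses) ∧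
      posLit x ∈ t0.conc ∧ negLit x ∈ t1.conc ∧ C = Resolvent t0.conc t1.conc x

/-- w-resolution tree with input lemmas. -/
def IsWRTI (F : CNF) : RTree → Set Clause → Prop
  | .leaf C, avail => C ∈ F ∨ C ∈ avail
  | .node C x t0 t1, avail => IsWRTI F t0 avail ∧ IsWRTI F t1 (avail ∪ t0.inputClauses) ∧
      C = Resolvent t0.conc t1.conc x

/-- Resolution tree with (arbitrary earlier) lemmas. -/
def IsRTL (F : CNF) : RTree → Set Clause → Prop
  | .leaf C, avail => C ∈ F ∨ C ∈ avail
  | .node C x t0 t1, avail => IsRTL F t0 avail ∧ IsRTL F t1 (avail ∪ t0.allClauses) ∧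
      posLit x ∈ t0.conc ∧ negLit x ∈ t1.conc ∧ C = Resolvent t0.conc t1.conc x

/-- w-resolution tree with (arbitrary earlier) lemmas. -/
def IsWRTL (F : CNF) : RTree → Set Clause → Prop
  | .leaf C, avail => C ∈ F ∨ C ∈ avail
  | .node C x t0 t1, avail => IsWRTL F t0 avail ∧ IsWRTL F t1 (avail ∪ t0.allClauses) ∧
      C = Resolvent t0.conc t1.conc x

/-- Resolution dags, presented in a topological order; node `n-1` is the conclusion. -/
structure RDag (F : CNF) where
  n : ℕ
  npos : 0 < n
  clause : Fin n → Clause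
  pred : Fin n → Option (Fin n × Fin n × Var)
  topo : ∀ i p, pred i = some p → p.1 < i ∧ p.2.1 < i
  leaf_mem : ∀ i, pred i = none → clause i ∈ F
  res_ok : ∀ i j k x, pred i = some (j, k, x) →
    posLit x ∈ clause j ∧ negLit x ∈ clause k ∧ clause i = Resolvent (clause j) (clause k) x

namespace RDag

variable {F : CNF}

def root (R : RDag F) : Fin R.n := ⟨R.n - 1, Nat.sub_lt R.npos one_pos⟩

def parent (R : RDag F) (j i : Fin R.n) : Prop :=
  ∃ p, R.pred i = some p ∧ (p.1 = j ∨ p.2.1 = j)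

def resVar (R : RDag F) (i : Fin R.n) : Option Var := (R.pred i).map (fun p => p.2.2)

def regular (R : RDag F) : Prop :=
  ∀ i j x, Relation.TransGen R.parent j i → R.resVar i = some x → R.resVar j ≠ some x

/-- `PathLen R i m`: there is a path with `m` edges from some leaf of `R` to `i`. -/
inductive PathLen (R : RDag F) : Fin R.n → ℕ → Prop
  | leaf (i) (h : R.pred i = none) : PathLen R i 0
  | step (i j m) (h : R.parent j i) (hj : PathLen R j m) : PathLen R i (m + 1)

end RDag

/-- w-resolution dags. -/
structure WRDag (F : CNF) where
  n : ℕ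
  npos : 0 < n
  clause : Fin n → Clause
  pred : Fin n → Option (Fin n × Fin n × Var)
  topo : ∀ i p, pred i = some p → p.1 < i ∧ p.2.1 < i
  leaf_mem : ∀ i, pred i = none → clause i ∈ F
  res_ok : ∀ i j k x, pred i = some (j, k, x) →
    clause i = Resolvent (clause j) (clause k) x

namespace WRDag

variable {F : CNF}

def root (R : WRDag F) : Fin R.n := ⟨R.n - 1, Nat.sub_lt R.npos one_pos⟩

def parent (R : WRDag F) (j i : Fin R.n) : Prop :=
  ∃ p, R.pred i = some p ∧ (p.1 = j ∨ p.2.1 = j)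

def resVar (R : WRDag F) (i : Fin R.n) : Option Var := (R.pred i).map (fun p => p.2.2)

def regular (R : WRDag F) : Prop :=
  ∀ i j x, Relation.TransGen R.parent j i → R.resVar i = some x → R.resVar j ≠ some x

def IsRefutation (R : WRDag F) : Prop := R.clause R.root = ∅

/-- `PathLits R v S`: there is a path from `v` to the root of `R` whose set of
edge labels is `S` (the edge from the first premise is labeled `¬x`, from the
second premise `x`). -/
inductive PathLits (R : WRDag F) : Fin R.n → Set Lit → Prop
  | root : PathLits R R.root ∅
  | left (i j k x S) (h : R.pred i = some (j, k, x)) (hi : PathLits R i S) :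
      PathLits R j (insert (negLit x) S)
  | right (i j k x S) (h : R.pred i = some (j, k, x)) (hi : PathLits R i S) :
      PathLits R k (insert (posLit x) S)

end WRDag
/-- A conflict graph for `F` under `α`.  The special node `□` is left implicit:
`x` is the conflict variable, and the edges from `x` and `¬x` to `□` are not
represented. -/
structure ConflictGraph (F : CNF) (α : Assign) where
  V : Finset Lit
  E : Finset (Lit × Lit)
  x : Var
  pos_mem : posLit x ∈ V
  neg_mem : negLit x ∈ V
  uniq : ∀ y, posLit y ∈ V → negLit y ∈ V → y = x
  edges_mem : ∀ e ∈ E, e.1 ∈ V ∧ e.2 ∈ V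
  acyclic : ∃ rank : Lit → ℕ, ∀ e ∈ E, rank e.1 < rank e.2
  leaf_true : ∀ l ∈ V, (∀ e ∈ E, e.2 ≠ l) → α l.1 = some l.2
  internal_clause : ∀ l ∈ V, (∃ e ∈ E, e.2 = l) →
      insert l ((V.filter (fun p => (p, l) ∈ E)).image Lit.neg) ∈ F
  sink : ∀ l ∈ V, (∃ e ∈ E, e.1 = l) ∨ l = posLit x ∨ l = negLit x

namespace ConflictGraph

variable {F : CNF} {α : Assign}

def leaves (G : ConflictGraph F α) : Finset Lit :=
  G.V.filter (fun l => ∀ e ∈ G.E, e.2 ≠ l)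

/-- The conflict clause: negations of the leaf literals. -/
def conflictClause (G : ConflictGraph F α) : Clause := G.leaves.image Lit.neg

def Reach (G : ConflictGraph F α) (a b : Lit) : Prop :=
  Relation.ReflTransGen (fun u v => (u, v) ∈ G.E) a b

/-- The induced clause of a literal `l`. -/
def inducedClause (G : ConflictGraph F α) (l : Lit) : Clause :=
  insert l ((G.leaves.filter (fun p => G.Reach p l)).image Lit.neg)

end ConflictGraph

/-- `H` is a subconflict graph of `G`. -/
def Subconflict {F : CNF} {α : Assign} (H G : ConflictGraph F α) : Prop :=
  H.V ⊆ G.V ∧ H.E ⊆ G.E ∧ H.x = G.x ∧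
  ∀ l ∈ H.V, (∃ e ∈ H.E, e.2 = l) → ∀ e ∈ G.E, e.2 = l → e ∈ H.E

/-- `H` is a proper subconflict graph of `G`: additionally, no path in `G` runs
from a non-leaf vertex of `H` to a leaf of `H`. -/
def ProperSub {F : CNF} {α : Assign} (H G : ConflictGraph F α) : Prop :=
  Subconflict H G ∧
  ∀ l ∈ H.V, (∃ e ∈ H.E, e.2 = l) → ∀ p ∈ H.leaves, ¬ G.Reach l p

def StrictSub {F : CNF} {α : Assign} (H G : ConflictGraph F α) : Prop :=
  Subconflict H G ∧ (H.V ≠ G.V ∨ H.E ≠ G.E)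

/-- A series-parallel decomposition of a conflict graph `G`:
`H i 0 = H_i` for `i ≤ k` and `H i j = H_{i,j}` for `j ≤ m i`. -/
structure SPDecomp {F : CNF} {α : Assign} (G : ConflictGraph F α) where
  k : ℕ
  hk : 1 ≤ k
  m : ℕ → ℕ
  hm : ∀ i < k, 1 ≤ m i
  H : ℕ → ℕ → ConflictGraph F α
  base_V : (H 0 0).V = {posLit G.x, negLit G.x}
  base_E : (H 0 0).E = ∅
  chain : ∀ i < k, ∀ j < m i, StrictSub (H i j) (H i (j + 1))
  proper : ∀ i < k, ∀ j ≤ m i, ProperSub (H i j) G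
  link : ∀ i, i + 1 < k → H i (m i) = H (i + 1) 0
  top : H (k - 1) (m (k - 1)) = G

/-- The learnable clauses of a series-parallel decomposition. -/
def SPDecomp.learnable {F : CNF} {α : Assign} {G : ConflictGraph F α}
    (D : SPDecomp G) : Set Clause :=
  {C | ∃ j, 1 ≤ j ∧ j ≤ D.m 0 ∧ C = (D.H 0 j).conflictClause} ∪
  {C | ∃ i j l, 0 < i ∧ i < D.k ∧ 1 ≤ j ∧ j ≤ D.m i ∧
      l ∈ (D.H i 0).leaves ∧ l ∉ (D.H i j).leaves ∧
      C = (D.H i j).inducedClause l}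

def SPDecomp.isSeries {F : CNF} {α : Assign} {G : ConflictGraph F α}
    (D : SPDecomp G) : Prop := D.k = 1

/-- Executions of the basic DLL algorithm returning UNSAT;
the `ℕ` counts the recursive calls made. -/
inductive DLLUnsat (F : CNF) : Assign → ℕ → Prop
  | conflict (α) (h : CNFFalse F α) : DLLUnsat F α 0
  | branch (α) (x : Var) (ε : Bool) (s0 s1 : ℕ)
      (hnot0 : ¬ CNFFalse F α) (hnot1 : ¬ CNFTrue F α) (hx : α x = none)
      (h0 : DLLUnsat F (α.set x ε) s0) (h1 : DLLUnsat F (α.set x (!ε)) s1) :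
      DLLUnsat F α (s0 + s1 + 2)

/-- Executions of the (non-greedy) DLL-L-UP algorithm returning UNSAT:
`DLLLUP F α s F'` means the call on `(F, α)` returns `(F', UNSAT)` after `s`
recursive calls. -/
inductive DLLLUP : CNF → Assign → ℕ → CNF → Prop
  | conflict (F : CNF) (α : Assign) (G : ConflictGraph F α) (D : SPDecomp G)
      (S : Set Clause) (hS : S ⊆ D.learnable) : DLLLUP F α 0 (F ∪ S)
  | branch (F : CNF) (α : Assign) (x : Var) (ε : Bool) (s0 s1 : ℕ) (F1 F2 : CNF)
      (hx : α x = none)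
      (h0 : DLLLUP F (α.set x ε) s0 F1) (h1 : DLLLUP F1 (α.set x (!ε)) s1 F2) :
      DLLLUP F α (s0 + s1 + 2) F2

/-- Executions of DLL-Learn returning UNSAT: `DLLLearn F α s F' C` means the
call on `(F, α)` returns `(F', UNSAT)` with tagged clause `C` after `s`
recursive calls. -/
inductive DLLLearn : CNF → Assign → ℕ → CNF → Clause → Prop
  | base (F : CNF) (α : Assign) (C : Clause) (hC : C ∈ F) (hf : falsifies α C) :
      DLLLearn F α 0 F C
  | branch (F : CNF) (α : Assign) (x : Var) (ε : Bool) (s0 s1 : ℕ)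
      (F1 F2 : CNF) (C0 C1 : Clause) (hx : α x = none)
      (h0 : DLLLearn F (α.set x ε) s0 F1 C0)
      (h1 : DLLLearn F1 (α.set x (!ε)) s1 F2 C1) :
      DLLLearn F α (s0 + s1 + 2)
        (F2 ∪ {C0.erase (x, !ε) ∪ C1.erase (x, ε)})
        (C0.erase (x, !ε) ∪ C1.erase (x, ε))

/-- Trees of resolution and weakening inferences. -/
inductive WTree where
  | leaf (C : Clause)
  | res (C : Clause) (x : Var) (t0 t1 : WTree)
  | weak (C : Clause) (t : WTree)

namespace WTree

def conc : WTree → Clause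
  | leaf C => C
  | res C _ _ _ => C
  | weak C _ => C

def size : WTree → ℕ
  | leaf _ => 1
  | res _ _ t0 t1 => t0.size + t1.size + 1
  | weak _ t => t.size + 1

def allClauses : WTree → Set Clause
  | leaf C => {C}
  | res C _ t0 t1 => {C} ∪ t0.allClauses ∪ t1.allClauses
  | weak C t => {C} ∪ t.allClauses

def leafClauses : WTree → Set Clause
  | leaf C => {C}
  | res _ _ t0 t1 => t0.leafClauses ∪ t1.leafClauses
  | weak _ t => t.leafClauses

end WTree

/-- Resolution trees with lemmas and weakening, all lemmas of size `≤ k`. -/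
def IsRTLW (F : CNF) (k : ℕ) : WTree → Set Clause → Prop
  | .leaf C, avail => C ∈ F ∨ (C ∈ avail ∧ C.card ≤ k)
  | .res C x t0 t1, avail => IsRTLW F k t0 avail ∧ IsRTLW F k t1 (avail ∪ t0.allClauses) ∧
      posLit x ∈ t0.conc ∧ negLit x ∈ t1.conc ∧ C = Resolvent t0.conc t1.conc x
  | .weak C t, avail => IsRTLW F k t avail ∧ t.conc ⊆ C

def phpVar (n i j : ℕ) : Var := i * n + j

/-- The clauses of the functional pigeonhole principle `FPHP_n`. -/
def FPHP (n : ℕ) : CNF :=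
  {C | ∃ i, 1 ≤ i ∧ i ≤ n + 1 ∧
      C = (Finset.Icc 1 n).image (fun j => posLit (phpVar n i j))} ∪
  {C | ∃ i j k, 1 ≤ i ∧ i < j ∧ j ≤ n + 1 ∧ 1 ≤ k ∧ k ≤ n ∧
      C = {negLit (phpVar n i k), negLit (phpVar n j k)}} ∪
  {C | ∃ i j k, 1 ≤ i ∧ i ≤ n + 1 ∧ 1 ≤ j ∧ j < k ∧ k ≤ n ∧
      C = {negLit (phpVar n i j), negLit (phpVar n i k)}}

/-- The variable extension `VE(F)` with extension variables `q` and `P`. -/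
def VE (F : CNF) (q : Var) (P : Finset Var) : CNF :=
  F ∪ {D | ∃ C ∈ F, ∃ l ∈ C, D = {posLit q, Lit.neg l}} ∪ {P.image posLit}

lemma regAux_mono : ∀ (t : RTree) (s s' : Set Var), s' ⊆ s → t.regAux s → t.regAux s'
  | .leaf _, _, _, _, _ => trivial
  | .node _ x t0 t1, s, s', hsub, ⟨hx, h0, h1⟩ =>
    ⟨fun h => hx (hsub h),
     regAux_mono t0 _ _ (Set.insert_subset_insert hsub) h0,
     regAux_mono t1 _ _ (Set.insert_subset_insert hsub) h1⟩

lemma regAux_notin : ∀ (t : RTree) (s : Set Var), t.regAux s → ∀ y ∈ s, y ∉ t.resVars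
  | .leaf _, _, _, _, _ => by simp [RTree.resVars]
  | .node _ x t0 t1, s, ⟨hx, h0, h1⟩, y, hy => by
    simp only [RTree.resVars, Finset.mem_insert, Finset.mem_union]
    push_neg
    refine ⟨?_, regAux_notin t0 _ h0 y (Set.mem_insert_of_mem _ hy),
            regAux_notin t1 _ h1 y (Set.mem_insert_of_mem _ hy)⟩
    rintro rfl; exact hx hy

lemma rtree_size_pos : ∀ t : RTree, 1 ≤ t.size
  | .leaf _ => le_refl _
  | .node _ _ t0 t1 => by simp [RTree.size]

lemma not_cnftrue_of_unsat {F : CNF} (hU : Unsat F) (α : Assign) : ¬ CNFTrue F α := by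
  intro hT
  apply hU
  refine ⟨fun y => (α y).getD true, fun C hC => ?_⟩
  obtain ⟨l, hl, hsat⟩ := hT C hC
  exact ⟨l, hl, by simp [satLit] at hsat; simp [hsat]⟩

lemma stmt8_aux (F : CNF) (hU : Unsat F) :
    ∀ (t : RTree), IsResTreeFrom F t → t.regular →
    ∀ (α : Assign), falsifies α t.conc → (∀ x ∈ t.resVars, α x = none) →
    ∃ s' ≤ t.size - 1, DLLUnsat F α s' := by
  intro t
  induction t with
  | leaf C =>
    intro ht _ α hα _
    exact ⟨0, Nat.zero_le _, .conflict α ⟨C, ht, hα⟩⟩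
  | node C x t0 t1 ih0 ih1 =>
    intro ht hreg α hα hdisj
    obtain ⟨ht0, ht1, hp, hn, hC⟩ := ht
    obtain ⟨_, hr0, hr1⟩ := hreg
    have hx0 : x ∉ t0.resVars :=
      regAux_notin t0 _ hr0 x (Set.mem_insert _ _)
    have hx1 : x ∉ t1.resVars :=
      regAux_notin t1 _ hr1 x (Set.mem_insert _ _)
    have hαx : α x = none := hdisj x (by simp [RTree.resVars])
    -- falsification of children's conclusions
    have hfal : ∀ (b : Bool) (tb : RTree), (x, !b) ∈ tb.conc →
        (∀ l ∈ tb.conc, l ≠ (x, !b) → l ∈ C) →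
        falsifies (α.set x b) tb.conc := by
      intro b tb _ hsub l hl
      by_cases hlx : l = (x, !b)
      · subst hlx; simp [Assign.set]
      · have hlC : l ∈ C := hsub l hl hlx
        have h1 : α l.1 = some (!l.2) := hα l hlC
        have hne : l.1 ≠ x := by
          rintro h
          rcases l with ⟨y, c⟩
          simp at h; subst h
          have : c = b := by
            cases c <;> cases b <;> simp_all
          subst this
          rw [hαx] at h1; exact Option.some_ne_none _ h1.symm
        simpa [Assign.set, hne] using h1
    have hdisj0 : ∀ y ∈ t0.resVars, (α.set x false) y = none := by
      intro y hy
      have hne : y ≠ x := fun h => hx0 (h ▸ hy)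
      simp only [Assign.set, if_neg hne]
      exact hdisj y (by simp [RTree.resVars, hy])
    have hdisj1 : ∀ y ∈ t1.resVars, (α.set x true) y = none := by
      intro y hy
      have hne : y ≠ x := fun h => hx1 (h ▸ hy)
      simp only [Assign.set, if_neg hne]
      exact hdisj y (by simp [RTree.resVars, hy])
    have hsub0 : ∀ l ∈ t0.conc, l ≠ (x, !false) → l ∈ C := by
      intro l hl hne
      rw [hC]
      exact Finset.mem_union_left _ (Finset.mem_erase.2 ⟨by simpa [posLit] using hne, hl⟩)
    have hsub1 : ∀ l ∈ t1.conc, l ≠ (x, !true) → l ∈ C := by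
      intro l hl hne
      rw [hC]
      exact Finset.mem_union_right _ (Finset.mem_erase.2 ⟨by simpa [negLit] using hne, hl⟩)
    obtain ⟨s0, hs0, hd0⟩ := ih0 ht0 (regAux_mono t0 _ _ (Set.empty_subset _) hr0)
      (α.set x false) (hfal false t0 (by simpa [posLit] using hp) hsub0) hdisj0
    obtain ⟨s1, hs1, hd1⟩ := ih1 ht1 (regAux_mono t1 _ _ (Set.empty_subset _) hr1)
      (α.set x true) (hfal true t1 (by simpa [negLit] using hn) hsub1) hdisj1
    by_cases hF : CNFFalse F α
    · exact ⟨0, Nat.zero_le _, .conflict α hF⟩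
    · refine ⟨s0 + s1 + 2, ?_, ?_⟩
      · have h0 := rtree_size_pos t0
        have h1 := rtree_size_pos t1
        simp only [RTree.size]
        omega
      · exact .branch α x false s0 s1 hF (not_cnftrue_of_unsat hU α) hαx hd0 hd1

/-- Prop. 4.2: a regular resolution tree of size `s` for a clause falsified by
`α` (with resolution variables disjoint from `dom α`) yields a DLL execution on
`(F, α)` returning UNSAT after at most `s - 1` recursive calls. -/
theorem stmt8 (F : CNF) (hU : Unsat F) (t : RTree) (s : ℕ)
    (ht : IsResTreeFrom F t) (hreg : t.regular) (hs : t.size = s)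
    (α : Assign) (hα : falsifies α t.conc)
    (hdisj : ∀ x ∈ t.resVars, α x = none) :
    ∃ s' ≤ s - 1, DLLUnsat F α s' := by
  subst hs
  exact stmt8_aux F hU t ht hreg α hα hdisj
end
end

section
/- An unsatisfiable set F of clauses has an execution of the basic DLL algorithm on (F, ∅) making fewer than s recursive calls if and only if F has a regular tree resolution refutation of size at most s. -/
open Classical

noncomputable section

/-! Auxiliary lemmas for stmt9 -/

lemma regAux_anti (t : RTree) : ∀ {s s' : Set Var}, s ⊆ s' → t.regAux s' → t.regAux s := by
  induction t with
  | leaf C => intro s s' _ _; trivial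
  | node C x t0 t1 ih0 ih1 =>
    intro s s' hss h
    exact ⟨fun hx => h.1 (hss hx), ih0 (Set.insert_subset_insert hss) h.2.1,
      ih1 (Set.insert_subset_insert hss) h.2.2⟩

lemma assigned_set (α : Assign) (x : Var) (b : Bool) :
    {v | Assign.set α x b v ≠ none} = insert x {v | α v ≠ none} := by
  ext v
  simp only [Set.mem_setOf_eq, Set.mem_insert_iff, Assign.set]
  by_cases h : v = x <;> simp [h]

lemma falsifies_resolvent {α : Assign} {Ca Cb : Clause} {x : Var}
    (hfa : falsifies (α.set x false) Ca) (hfb : falsifies (α.set x true) Cb) :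
    falsifies α (Resolvent Ca Cb x) := by
  intro l hl
  rcases Finset.mem_union.mp hl with hl' | hl'
  · have hlc := Finset.mem_of_mem_erase hl'
    have hlx : l.1 ≠ x := by
      intro hlx
      have h := hfa l hlc
      rw [hlx] at h
      simp only [Assign.set, if_pos rfl] at h
      have h2 : l.2 = true := by cases hl2 : l.2 <;> simp [hl2] at h ⊢
      exact (Finset.ne_of_mem_erase hl') (Prod.ext hlx h2)
    have h := hfa l hlc
    rwa [show (Assign.set α x false) l.1 = α l.1 by simp [Assign.set, hlx]] at h
  · have hlc := Finset.mem_of_mem_erase hl'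
    have hlx : l.1 ≠ x := by
      intro hlx
      have h := hfb l hlc
      rw [hlx] at h
      simp only [Assign.set, if_pos rfl] at h
      have h2 : l.2 = false := by cases hl2 : l.2 <;> simp [hl2] at h ⊢
      exact (Finset.ne_of_mem_erase hl') (Prod.ext hlx h2)
    have h := hfb l hlc
    rwa [show (Assign.set α x true) l.1 = α l.1 by simp [Assign.set, hlx]] at h

lemma falsifies_unset {α : Assign} {C : Clause} {x : Var} {ε : Bool}
    (hf : falsifies (α.set x ε) C) (hc : ((x, !ε) : Lit) ∉ C) : falsifies α C := by
  intro l hl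
  have h := hf l hl
  by_cases hlx : l.1 = x
  · exfalso
    rw [hlx] at h
    simp only [Assign.set, if_pos rfl] at h
    have h2 : l.2 = !ε := by cases hl2 : l.2 <;> cases ε <;> simp [hl2] at h ⊢
    exact hc (by rw [← h2, ← hlx]; exact hl)
  · rwa [show (Assign.set α x ε) l.1 = α l.1 by simp [Assign.set, hlx]] at h

lemma dll_to_tree {F : CNF} : ∀ {α : Assign} {s : ℕ}, DLLUnsat F α s →
    ∃ t : RTree, IsResTreeFrom F t ∧ falsifies α t.conc ∧
      t.regAux {v | α v ≠ none} ∧ t.size ≤ s + 1 := by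
  intro α s h
  induction h with
  | conflict α h =>
    obtain ⟨C, hC, hf⟩ := h
    exact ⟨RTree.leaf C, hC, hf, trivial, le_refl _⟩
  | branch α x ε s0 s1 hnot0 hnot1 hx h0 h1 ih0 ih1 =>
    obtain ⟨t0, ht0F, ht0f, ht0r, ht0s⟩ := ih0
    obtain ⟨t1, ht1F, ht1f, ht1r, ht1s⟩ := ih1
    rw [assigned_set] at ht0r ht1r
    have hxS : x ∉ {v | α v ≠ none} := by simp [hx]
    by_cases hc0 : (x, !ε) ∈ t0.conc
    · by_cases hc1 : (x, ε) ∈ t1.conc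
      · -- resolve; orientation depends on ε
        cases ε with
        | false =>
          refine ⟨RTree.node (Resolvent t0.conc t1.conc x) x t0 t1,
            ⟨ht0F, ht1F, hc0, hc1, rfl⟩, ?_, ⟨hxS, ht0r, ht1r⟩, by
              simp only [RTree.size]; omega⟩
          exact falsifies_resolvent ht0f ht1f
        | true =>
          refine ⟨RTree.node (Resolvent t1.conc t0.conc x) x t1 t0,
            ⟨ht1F, ht0F, hc1, hc0, rfl⟩, ?_, ⟨hxS, ht1r, ht0r⟩, by
              simp only [RTree.size]; omega⟩
          exact falsifies_resolvent ht1f ht0f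
      · refine ⟨t1, ht1F, ?_, regAux_anti _ (Set.subset_insert _ _) ht1r, by omega⟩
        exact falsifies_unset ht1f (by simpa using hc1)
    · refine ⟨t0, ht0F, ?_, regAux_anti _ (Set.subset_insert _ _) ht0r, by omega⟩
      exact falsifies_unset ht0f hc0

lemma tree_to_dll {F : CNF} (hU : Unsat F) :
    ∀ (t : RTree), IsResTreeFrom F t → ∀ α : Assign, falsifies α t.conc →
      t.regAux {v | α v ≠ none} → ∃ s' < t.size, DLLUnsat F α s' := by
  intro t
  induction t with
  | leaf C =>
    intro hC α hf _
    exact ⟨0, by simp [RTree.size], DLLUnsat.conflict α ⟨C, hC, hf⟩⟩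
  | node C x t0 t1 ih0 ih1 =>
    intro hT α hf hreg
    obtain ⟨hT0, hT1, hpos, hneg, hres⟩ := hT
    obtain ⟨hxS, hr0, hr1⟩ := hreg
    by_cases hCF : CNFFalse F α
    · exact ⟨0, by simp [RTree.size], DLLUnsat.conflict α hCF⟩
    · have hx : α x = none := by
        by_contra hxn
        exact hxS hxn
      have hnoX : ∀ l ∈ C, l.1 ≠ x := by
        intro l hl hlx
        have h := hf l hl
        rw [hlx, hx] at h
        cases h
      -- falsify t0.conc with x := false
      have hf0 : falsifies (α.set x false) t0.conc := by
        intro l hl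
        by_cases hlp : l = posLit x
        · subst hlp; simp [Assign.set, posLit]
        · have hlx : l.1 ≠ x := by
            intro hlx
            have hlC : l ∈ C := by
              rw [hres]
              exact Finset.mem_union_left _ (Finset.mem_erase.mpr ⟨hlp, hl⟩)
            exact hnoX l hlC hlx
          have hlC : l ∈ C := by
            rw [hres]
            exact Finset.mem_union_left _ (Finset.mem_erase.mpr ⟨hlp, hl⟩)
          have h := hf l hlC
          rw [show (Assign.set α x false) l.1 = α l.1 by simp [Assign.set, hlx]]
          exact h
      have hf1 : falsifies (α.set x true) t1.conc := by
        intro l hl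
        by_cases hlp : l = negLit x
        · subst hlp; simp [Assign.set, negLit]
        · have hlx : l.1 ≠ x := by
            intro hlx
            have hlC : l ∈ C := by
              rw [hres]
              exact Finset.mem_union_right _ (Finset.mem_erase.mpr ⟨hlp, hl⟩)
            exact hnoX l hlC hlx
          have hlC : l ∈ C := by
            rw [hres]
            exact Finset.mem_union_right _ (Finset.mem_erase.mpr ⟨hlp, hl⟩)
          have h := hf l hlC
          rw [show (Assign.set α x true) l.1 = α l.1 by simp [Assign.set, hlx]]
          exact h
      obtain ⟨s0, hs0, hd0⟩ := ih0 hT0 (α.set x false) hf0 (by rw [assigned_set]; exact hr0)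
      obtain ⟨s1, hs1, hd1⟩ := ih1 hT1 (α.set x true) hf1 (by rw [assigned_set]; exact hr1)
      refine ⟨s0 + s1 + 2, by simp [RTree.size]; omega, ?_⟩
      exact DLLUnsat.branch α x false s0 s1 hCF (not_cnftrue_of_unsat hU α) hx hd0
        (by simpa using hd1)

/-- Thm. 4.3: `F` has a DLL execution with fewer than `s` recursive calls iff
`F` has a regular tree resolution refutation of size `≤ s`. -/
theorem stmt9 (F : CNF) (hU : Unsat F) (s : ℕ) :
    (∃ s' < s, DLLUnsat F emptyAssign s') ↔
    (∃ t : RTree, IsResTreeFrom F t ∧ t.regular ∧ t.conc = ∅ ∧ t.size ≤ s) := by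
  constructor
  · rintro ⟨s', hs', hd⟩
    obtain ⟨t, htF, htf, htr, hts⟩ := dll_to_tree hd
    refine ⟨t, htF, ?_, ?_, by omega⟩
    · unfold RTree.regular
      have : {v | emptyAssign v ≠ none} = (∅ : Set Var) := by
        ext v; simp [emptyAssign]
      rwa [this] at htr
    · apply Finset.eq_empty_of_forall_notMem
      intro l hl
      have := htf l hl
      simp [emptyAssign] at this
  · rintro ⟨t, htF, htr, htc, hts⟩
    have hreg : t.regAux {v | emptyAssign v ≠ none} := by
      have : {v | emptyAssign v ≠ none} = (∅ : Set Var) := by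
        ext v; simp [emptyAssign]
      rw [this]; exact htr
    obtain ⟨s', hs', hd⟩ := tree_to_dll hU t htF emptyAssign
      (by rw [htc]; intro l hl; simp at hl) hreg
    exact ⟨s', by omega, hd⟩
end
end
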